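/- Let r be a positive integer and let a be an integer coprime to r. Then the ring endomorphism of Z[X]/(X^r − 1) induced by X ↦ X^a is an automorphism, and it maps the ideal generated by (the image of) Ψ_r(X) onto itself. -/

import Mathlib

open Polynomial

noncomputable section

/-- `Ψ_r(X) := (X^r − 1)/Φ_r(X) ∈ ℤ[X]`. -/
def PsiPoly (r : ℕ) : ℤ[X] := (X ^ r - 1) /ₘ cyclotomic r ℤ

lemma psi_mul (r : ℕ) : cyclotomic r ℤ * PsiPoly r = X ^ r - 1 := by
  have h := modByMonic_add_div ((X : ℤ[X]) ^ r - 1) (cyclotomic r ℤ)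
  have hd : ((X : ℤ[X]) ^ r - 1) %ₘ cyclotomic r ℤ = 0 :=
    (modByMonic_eq_zero_iff_dvd (cyclotomic.monic r ℤ)).2 (cyclotomic.dvd_X_pow_sub_one r ℤ)
  rw [hd, zero_add] at h
  exact h

lemma psi_monic (r : ℕ) (hr : 0 < r) : (PsiPoly r).Monic := by
  have h := psi_mul r
  have hm : ((X : ℤ[X]) ^ r - 1).Monic := monic_X_pow_sub_C 1 hr.ne'
  rw [← h] at hm
  exact (cyclotomic.monic r ℤ).of_mul_monic_left hm

lemma psi_map_prod (r : ℕ) (hr : 0 < r) :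
    (PsiPoly r).map (Int.castRingHom ℚ) = ∏ d ∈ r.properDivisors, cyclotomic d ℚ := by
  have h := congrArg (Polynomial.map (Int.castRingHom ℚ)) (psi_mul r)
  rw [Polynomial.map_mul, map_cyclotomic, Polynomial.map_sub, Polynomial.map_pow,
    Polynomial.map_X, Polynomial.map_one] at h
  have h2 : ∏ d ∈ r.divisors, cyclotomic d ℚ = X ^ r - 1 :=
    prod_cyclotomic_eq_X_pow_sub_one hr ℚ
  rw [← Nat.insert_self_properDivisors hr.ne', Finset.prod_insert
    Nat.self_notMem_properDivisors] at h2
  have hc : cyclotomic r ℚ ≠ 0 := cyclotomic_ne_zero r ℚ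
  apply mul_left_cancel₀ hc
  rw [h, ← h2]

lemma psi_dvd_expand (r c : ℕ) (hr : 0 < r) (hc : Nat.Coprime c r) :
    PsiPoly r ∣ expand ℤ c (PsiPoly r) := by
  rw [← map_dvd_map (Int.castRingHom ℚ) Int.cast_injective (psi_monic r hr), map_expand,
    psi_map_prod r hr]
  apply Finset.prod_dvd_of_coprime
  · intro i hi j hj hij
    exact cyclotomic.isCoprime_rat hij
  · intro d hd
    obtain ⟨hdvd, hlt⟩ := Nat.mem_properDivisors.1 hd
    have hd0 : 0 < d := Nat.pos_of_dvd_of_pos hdvd hr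
    obtain ⟨ζ, hζ⟩ : ∃ ζ : ℂ, IsPrimitiveRoot ζ d :=
      ⟨Complex.exp (2 * Real.pi * Complex.I / d), Complex.isPrimitiveRoot_exp d hd0.ne'⟩
    rw [cyclotomic_eq_minpoly_rat hζ hd0]
    apply minpoly.dvd
    rw [expand_aeval]
    have hζc : IsPrimitiveRoot (ζ ^ c) d :=
      hζ.pow_of_coprime c (Nat.Coprime.coprime_dvd_right hdvd hc)
    have : (∏ e ∈ r.properDivisors, cyclotomic e ℚ) =
        cyclotomic d ℚ * ∏ e ∈ r.properDivisors.erase d, cyclotomic e ℚ :=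
      (Finset.mul_prod_erase _ _ hd).symm
    rw [this, map_mul]
    have : aeval (ζ ^ c) (cyclotomic d ℚ) = 0 := by
      rw [aeval_def, ← eval_map, map_cyclotomic]
      exact hζc.isRoot_cyclotomic hd0
    rw [this, zero_mul]


/-- For `a` an integer coprime to `r`, the ring endomorphism
of `ℤ[X]/(X^r − 1)` induced by `X ↦ X^a` (note `X` is a unit there) is an
automorphism, and it maps the ideal generated by `Ψ_r(X)` onto itself. -/
theorem stmt_14 (r : ℕ) (hr : 0 < r) (a : ℤ) (ha : Int.gcd a r = 1) :
    let R := ℤ[X] ⧸ Ideal.span {(X : ℤ[X]) ^ r - 1}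
    let mk : ℤ[X] →+* R := Ideal.Quotient.mk (Ideal.span {(X : ℤ[X]) ^ r - 1})
    ∃ (u : Rˣ) (σ : R ≃+* R),
      (u : R) = mk X ∧
      σ (mk X) = ((u ^ a : Rˣ) : R) ∧
      Ideal.map (σ : R →+* R) (Ideal.span {mk (PsiPoly r)}) =
        Ideal.span {mk (PsiPoly r)} := by

  intro R mk
  haveI : NeZero r := ⟨hr.ne'⟩
  set I : Ideal ℤ[X] := Ideal.span {(X : ℤ[X]) ^ r - 1} with hI
  -- X^r = 1 in R
  have hXr : (mk X) ^ r = 1 := by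
    have : mk ((X : ℤ[X]) ^ r) = mk 1 := by
      rw [Ideal.Quotient.mk_eq_mk_iff_sub_mem]
      exact Ideal.subset_span rfl
    simpa using this
  have hmkpow : ∀ n : ℕ, (mk X) ^ n = (mk X) ^ (n % r) := by
    intro n
    conv_lhs => rw [← Nat.div_add_mod n r]
    rw [pow_add, pow_mul, hXr, one_pow, one_mul]
  -- the unit u
  have huinv : mk X * (mk X) ^ (r - 1) = 1 := by
    rw [← pow_succ', Nat.sub_add_cancel hr, hXr]
  refine ⟨⟨mk X, (mk X) ^ (r - 1), huinv, by rw [mul_comm]; exact huinv⟩, ?_⟩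
  set u : Rˣ := ⟨mk X, (mk X) ^ (r - 1), huinv, by rw [mul_comm]; exact huinv⟩ with hu
  have hur : u ^ r = 1 := Units.ext (by simpa using hXr)
  -- a' and b'
  set a' : ℕ := (a % r).toNat with ha'
  have ha'cast : (a' : ℤ) = a % r := Int.toNat_of_nonneg (Int.emod_nonneg a (by exact_mod_cast hr.ne'))
  have ha'cop : Nat.Coprime a' r := by
    have hco : IsCoprime (a % r) (r : ℤ) := by
      rw [Int.emod_def, sub_eq_add_neg, ← mul_neg]
      exact (Int.isCoprime_iff_gcd_eq_one.2 ha).add_mul_left_left _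
    have : Int.gcd (a % r) r = 1 := Int.isCoprime_iff_gcd_eq_one.1 hco
    unfold Nat.Coprime
    rw [← Int.gcd_natCast_natCast, ha'cast, this]
  set v : (ZMod r)ˣ := ZMod.unitOfCoprime a' ha'cop with hv
  set b' : ℕ := ((v⁻¹ : (ZMod r)ˣ) : ZMod r).val with hb'
  have hb'cop : Nat.Coprime b' r := ZMod.val_coe_unit_coprime v⁻¹
  have hab : (a' * b') % r = 1 % r := by
    have : ((a' * b' : ℕ) : ZMod r) = ((1 : ℕ) : ZMod r) := by
      push_cast
      rw [ZMod.natCast_val, ZMod.cast_id, ← ZMod.coe_unitOfCoprime a' ha'cop, ← hv,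
        ← Units.val_mul, mul_inv_cancel, Units.val_one]
    exact (ZMod.natCast_eq_natCast_iff _ _ _).1 this
  -- lifted endomorphisms
  have hker : ∀ c : ℕ, ∀ p ∈ I, (mk.comp ((expand ℤ c : ℤ[X] →ₐ[ℤ] ℤ[X]) : ℤ[X] →+* ℤ[X])) p = 0 := by
    intro c p hp
    have hle : I ≤ RingHom.ker (mk.comp ((expand ℤ c : ℤ[X] →ₐ[ℤ] ℤ[X]) : ℤ[X] →+* ℤ[X])) := by
      rw [hI, Ideal.span_le]
      intro q hq
      rw [Set.mem_singleton_iff] at hq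
      subst hq
      simp only [SetLike.mem_coe, RingHom.mem_ker, RingHom.comp_apply, AlgHom.coe_toRingHom,
        map_sub, map_pow, expand_X, map_one, ← pow_mul]
      rw [mul_comm c r, pow_mul, hXr, one_pow, sub_self]
    exact hle hp
  set τ : ℕ → (R →+* R) := fun c =>
    Ideal.Quotient.lift I (mk.comp ((expand ℤ c : ℤ[X] →ₐ[ℤ] ℤ[X]) : ℤ[X] →+* ℤ[X])) (hker c) with hτ
  have hτmk : ∀ c p, τ c (mk p) = mk (expand ℤ c p) := fun c p => Ideal.Quotient.lift_mk _ _ _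
  have hτX : ∀ c, τ c (mk X) = (mk X) ^ c := by
    intro c
    rw [hτmk, expand_X, map_pow]
  have hcomp : ∀ c d : ℕ, (c * d) % r = 1 % r → (τ c).comp (τ d) = RingHom.id R := by
    intro c d hcd
    apply Ideal.Quotient.ringHom_ext
    apply Polynomial.ringHom_ext'
    · ext n
      simp [hτmk]
    · show τ c (τ d (mk X)) = mk X
      rw [hτX, map_pow, hτX, ← pow_mul, hmkpow, hcd, ← hmkpow, pow_one]
  set σ : R ≃+* R := RingEquiv.ofRingHom (τ a') (τ b')
    (hcomp a' b' hab) (hcomp b' a' (by rwa [mul_comm] at hab)) with hσ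
  refine ⟨σ, rfl, ?_, ?_⟩
  · -- σ (mk X) = u ^ a
    have h1 : σ (mk X) = (mk X) ^ a' := hτX a'
    have h2 : u ^ a = u ^ a' := by
      conv_lhs => rw [← Int.emod_add_mul_ediv a r]
      rw [zpow_add, zpow_mul, zpow_natCast u r, hur, one_zpow, mul_one, ← ha'cast,
        zpow_natCast]
    rw [h1, h2]
    simp [hu]
  · -- ideal map
    set J : Ideal R := Ideal.span {mk (PsiPoly r)} with hJ
    have hsub : ∀ c : ℕ, Nat.Coprime c r → ∀ x ∈ J, τ c x ∈ J := by
      intro c hcop x hx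
      obtain ⟨g, hg⟩ := psi_dvd_expand r c hr hcop
      have hgen : τ c (mk (PsiPoly r)) ∈ J := by
        rw [hτmk, hJ, hg, map_mul]
        exact Ideal.mul_mem_right _ _ (Ideal.subset_span rfl)
      rw [hJ, Ideal.mem_span_singleton] at hx
      obtain ⟨y, hy⟩ := hx
      rw [hy, map_mul]
      exact Ideal.mul_mem_right _ _ hgen
    apply le_antisymm
    · rw [Ideal.map_le_iff_le_comap]
      intro x hx
      exact hsub a' ha'cop x hx
    · intro x hx
      have hb : τ b' x ∈ J := hsub b' hb'cop x hx
      have : (σ : R →+* R) (τ b' x) = x := by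
        have := hcomp a' b' hab
        calc (σ : R →+* R) (τ b' x) = ((τ a').comp (τ b')) x := rfl
        _ = x := by rw [this]; rfl
      exact this ▸ Ideal.mem_map_of_mem _ hb

end
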